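/- Consider the linear ODE system X' = AX where A is an N×N reaction matrix, and let X_∞ = (u_{1,∞},...,u_{N,∞}) be a positive vector with A X_∞ = 0. For a solution X(t) = (u_1(t),...,u_N(t)), the quadratic relative entropy E(t) = ∑_{i=1}^N u_i(t)² / u_{i,∞} satisfies dE/dt = - ∑_{1 ≤ i < j ≤ N} (a_{ij} u_{j,∞} + a_{ji} u_{i,∞}) (u_i/u_{i,∞} - u_j/u_{j,∞})². In particular E is nonincreasing. -/

import Mathlib

open Finset

lemma tri_sum (N : ℕ) (f : Fin N → Fin N → ℝ)
    (hsymm : ∀ i j, f i j = f j i) (hdiag : ∀ i, f i i = 0) :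
    2 * ∑ i, ∑ j ∈ Finset.univ.filter (fun j => i < j), f i j = ∑ i, ∑ j, f i j := by
  have h1 : ∀ i : Fin N, ∑ j ∈ Finset.univ.filter (fun j => i < j), f i j
      = ∑ j, if i < j then f i j else 0 := by
    intro i; rw [Finset.sum_filter]
  have h2 : ∑ i, ∑ j, (if j < i then f i j else 0) = ∑ i, ∑ j, if i < j then f i j else 0 := by
    rw [Finset.sum_comm]
    exact Finset.sum_congr rfl fun i _ => Finset.sum_congr rfl fun j _ => by
      by_cases h : i < j <;> simp [h, hsymm i j]
  simp only [h1]
  rw [two_mul]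
  nth_rewrite 2 [← h2]
  rw [← Finset.sum_add_distrib]
  refine Finset.sum_congr rfl fun i _ => ?_
  rw [← Finset.sum_add_distrib]
  refine Finset.sum_congr rfl fun j _ => ?_
  rcases lt_trichotomy i j with h | h | h
  · simp [h, not_lt.2 h.le]
  · simp [h, hdiag]
  · simp [h, not_lt.2 h.le]

lemma key_sum (N : ℕ) (b : Matrix (Fin N) (Fin N) ℝ)
    (hrow : ∀ i, ∑ j, b i j = 0) (hcolb : ∀ j, ∑ i, b i j = 0) (y : Fin N → ℝ) :
    ∑ i, ∑ j ∈ Finset.univ.filter (fun j => i < j), (b i j + b j i) * (y i - y j) ^ 2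
      = -(2 * ∑ i, ∑ j, b i j * y i * y j) := by
  set f : Fin N → Fin N → ℝ := fun i j => (b i j + b j i) * (y i - y j) ^ 2 with hf
  have hsymm : ∀ i j, f i j = f j i := by intro i j; simp only [hf]; ring
  have hdiag : ∀ i, f i i = 0 := by intro i; simp [hf]
  have htri := tri_sum N f hsymm hdiag
  have h1 : ∑ i, ∑ j, b i j * y i ^ 2 = 0 := by
    simp only [← Finset.sum_mul]
    simp [hrow]
  have h2 : ∑ i, ∑ j, b j i * y i ^ 2 = 0 := by
    simp only [← Finset.sum_mul]
    simp [hcolb]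
  have h3 : ∑ i, ∑ j, b i j * y j ^ 2 = 0 := by
    rw [Finset.sum_comm]
    simp only [← Finset.sum_mul]
    simp [hcolb]
  have h4 : ∑ i, ∑ j, b j i * y j ^ 2 = 0 := by
    rw [Finset.sum_comm]
    simp only [← Finset.sum_mul]
    simp [hrow]
  have hcross : ∑ i, ∑ j, b j i * (y i * y j) = ∑ i, ∑ j, b i j * y i * y j := by
    rw [Finset.sum_comm]
    exact Finset.sum_congr rfl fun i _ => Finset.sum_congr rfl fun j _ => by ring
  have hexp : ∑ i, ∑ j, f i j
      = ∑ i, ∑ j, (b i j * y i ^ 2 + b j i * y i ^ 2 + b i j * y j ^ 2 + b j i * y j ^ 2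
          - 2 * (b i j * y i * y j) - 2 * (b j i * (y i * y j))) := by
    refine Finset.sum_congr rfl fun i _ => Finset.sum_congr rfl fun j _ => ?_
    simp only [hf]; ring
  have hval : ∑ i, ∑ j, f i j = -(4 * ∑ i, ∑ j, b i j * y i * y j) := by
    rw [hexp]
    simp only [Finset.sum_add_distrib, Finset.sum_sub_distrib, ← Finset.mul_sum]
    rw [h1, h2, h3, h4, hcross]
    ring
  have : 2 * ∑ i, ∑ j ∈ Finset.univ.filter (fun j => i < j), f i j
      = -(4 * ∑ i, ∑ j, b i j * y i * y j) := by rw [htri, hval]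
  linarith

theorem relative_entropy_dissipation_ode
    (N : ℕ) (A : Matrix (Fin N) (Fin N) ℝ)
    (hoff : ∀ i j, i ≠ j → 0 ≤ A i j)
    (hcol : ∀ j, ∑ i, A i j = 0)
    (Xinf : Fin N → ℝ) (hXinf : ∀ i, 0 < Xinf i) (heq : A.mulVec Xinf = 0)
    (X : ℝ → Fin N → ℝ)
    (hX : ∀ i t, HasDerivAt (fun s => X s i) ((A.mulVec (X t)) i) t) :
    (∀ t, HasDerivAt (fun s => ∑ i, (X s i) ^ 2 / Xinf i)
      (-(∑ i, ∑ j ∈ Finset.univ.filter (fun j => i < j),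
          (A i j * Xinf j + A j i * Xinf i) * (X t i / Xinf i - X t j / Xinf j) ^ 2)) t) ∧
    Antitone (fun t => ∑ i, (X t i) ^ 2 / Xinf i) := by
  have hne : ∀ i, Xinf i ≠ 0 := fun i => (hXinf i).ne'
  -- b matrix
  set b : Matrix (Fin N) (Fin N) ℝ := fun i j => A i j * Xinf j with hb
  have hrowb : ∀ i, ∑ j, b i j = 0 := by
    intro i
    have := congrFun heq i
    simpa [Matrix.mulVec, dotProduct, hb] using this
  have hcolb : ∀ j, ∑ i, b i j = 0 := by
    intro j
    simp only [hb, ← Finset.sum_mul, hcol, zero_mul]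
  have hderiv : ∀ t, HasDerivAt (fun s => ∑ i, (X s i) ^ 2 / Xinf i)
      (-(∑ i, ∑ j ∈ Finset.univ.filter (fun j => i < j),
          (A i j * Xinf j + A j i * Xinf i) * (X t i / Xinf i - X t j / Xinf j) ^ 2)) t := by
    intro t
    set y : Fin N → ℝ := fun i => X t i / Xinf i with hy
    have hD : HasDerivAt (fun s => ∑ i, (X s i) ^ 2 / Xinf i)
        (∑ i, (2 * X t i ^ 1 * (A.mulVec (X t)) i) / Xinf i) t :=
      HasDerivAt.fun_sum fun i _ => ((hX i t).pow 2).div_const (Xinf i)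
    have hval : ∑ i, (2 * X t i ^ 1 * (A.mulVec (X t)) i) / Xinf i
        = -(∑ i, ∑ j ∈ Finset.univ.filter (fun j => i < j),
            (A i j * Xinf j + A j i * Xinf i) * (X t i / Xinf i - X t j / Xinf j) ^ 2) := by
      have hkey := key_sum N b hrowb hcolb y
      have hLHS : ∑ i, (2 * X t i ^ 1 * (A.mulVec (X t)) i) / Xinf i
          = 2 * ∑ i, ∑ j, b i j * y i * y j := by
        rw [Finset.mul_sum]
        refine Finset.sum_congr rfl fun i _ => ?_
        have hXj : ∀ j, X t j = y j * Xinf j := by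
          intro j; simp only [hy]; rw [div_mul_cancel₀ _ (hne j)]
        rw [Matrix.mulVec, dotProduct]
        rw [Finset.mul_sum, Finset.mul_sum]
        rw [Finset.sum_div]
        refine Finset.sum_congr rfl fun j _ => ?_
        rw [hXj j]
        field_simp [hb, hy]
        ring
      rw [hLHS]
      have hS : (∑ i, ∑ j ∈ Finset.univ.filter (fun j => i < j),
            (A i j * Xinf j + A j i * Xinf i) * (X t i / Xinf i - X t j / Xinf j) ^ 2)
          = ∑ i, ∑ j ∈ Finset.univ.filter (fun j => i < j), (b i j + b j i) * (y i - y j) ^ 2 := rfl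
      rw [hS, hkey]; ring
    rw [hval] at hD
    exact hD
  refine ⟨hderiv, ?_⟩
  have hdiff : Differentiable ℝ (fun t => ∑ i, (X t i) ^ 2 / Xinf i) :=
    fun t => (hderiv t).differentiableAt
  refine antitone_of_deriv_nonpos hdiff fun t => ?_
  rw [(hderiv t).deriv]
  simp only [neg_nonpos]
  refine Finset.sum_nonneg fun i _ => Finset.sum_nonneg fun j hj => ?_
  have hij : i < j := by simpa using hj
  have h1 : 0 ≤ A i j := hoff i j hij.ne
  have h2 : 0 ≤ A j i := hoff j i hij.ne'
  have := (hXinf i).le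
  have := (hXinf j).le
  positivity
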